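/- Let F be the free group on generators a₁, …, aₙ, b (n ≥ 1), R the normal closure in F of {a₁, …, aₙ} ∪ [F,F], and S the normal closure in F of {a₁², …, aₙ², b} ∪ [F,F]. Then R'·S' is generated as a subgroup of F by γ₃(F) together with the elements [aᵢ,aⱼ] for 1 ≤ i < j ≤ n and the elements [aᵢ,b]² for 1 ≤ i ≤ n. -/

import Mathlib

open scoped commutatorElement


/-- The free group on generators `a₁, …, aₙ, b`. -/
abbrev FG (n : ℕ) := FreeGroup (Fin n ⊕ Unit)

/-- The generators `a i`. -/
def agen (n : ℕ) (i : Fin n) : FG n := FreeGroup.of (Sum.inl i)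

/-- The generator `b`. -/
def bgen (n : ℕ) : FG n := FreeGroup.of (Sum.inr ())

/-- `R`, the normal closure of `{a₁, …, aₙ} ∪ [F,F]` in `F`. -/
abbrev Rsub (n : ℕ) : Subgroup (FG n) :=
  Subgroup.normalClosure (Set.range (agen n) ∪ (commutator (FG n) : Set (FG n)))

/-- `S`, the normal closure of `{a₁², …, aₙ², b} ∪ [F,F]` in `F`. -/
abbrev Ssub (n : ℕ) : Subgroup (FG n) :=
  Subgroup.normalClosure
    ((Set.range fun i => agen n i ^ 2) ∪ {bgen n} ∪ (commutator (FG n) : Set (FG n)))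

section Helpers

variable {G : Type*} [Group G]

/-- A set of pairwise commuting elements generates a subgroup in which all elements
pairwise commute. -/
lemma closure_pairwise_commute {s : Set G}
    (h : ∀ x ∈ s, ∀ y ∈ s, Commute x y) :
    ∀ a ∈ Subgroup.closure s, ∀ b ∈ Subgroup.closure s, Commute a b := by
  have h1 : Subgroup.closure s ≤ Subgroup.centralizer s :=
    (Subgroup.closure_le _).2 fun x hx =>
      Subgroup.mem_centralizer_iff.2 fun y hy => (h y hy x hx).eq
  intro a ha b hb
  have h2 : Subgroup.closure s ≤ Subgroup.centralizer {a} := by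
    refine (Subgroup.closure_le _).2 fun y hy => Subgroup.mem_centralizer_iff.2 ?_
    intro z hz
    rw [Set.mem_singleton_iff] at hz
    subst hz
    exact (Subgroup.mem_centralizer_iff.1 (h1 ha) y hy).symm
  exact Subgroup.mem_centralizer_iff.1 (h2 hb) a (Set.mem_singleton a)

/-- In a group where all commutators are central, conjugation preserves commuting. -/
lemma conj_commute_of_commutator_central
    (hcen : ∀ x y : G, ⁅x, y⁆ ∈ Subgroup.center G)
    {x y : G} (h : Commute x y) (g : G) : Commute (g * x * g⁻¹) y := by
  have e : g * x * g⁻¹ = ⁅g, x⁆ * x := by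
    simp only [commutatorElement_def]
    group
  rw [e]
  exact Commute.mul_left ((Subgroup.mem_center_iff.1 (hcen g x) y).symm) h

/-- In a group where all commutators are central, a pairwise commuting set has
pairwise commuting normal closure. -/
lemma normalClosure_pairwise_commute
    (hcen : ∀ x y : G, ⁅x, y⁆ ∈ Subgroup.center G) {s : Set G}
    (h : ∀ x ∈ s, ∀ y ∈ s, Commute x y) :
    ∀ a ∈ Subgroup.normalClosure s, ∀ b ∈ Subgroup.normalClosure s, Commute a b := by
  apply closure_pairwise_commute
  intro x hx y hy
  rw [Group.mem_conjugatesOfSet_iff] at hx hy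
  obtain ⟨cx, hcx, hx⟩ := hx
  obtain ⟨cy, hcy, hy⟩ := hy
  rw [isConj_iff] at hx hy
  obtain ⟨g, rfl⟩ := hx
  obtain ⟨k, rfl⟩ := hy
  exact conj_commute_of_commutator_central hcen
    ((conj_commute_of_commutator_central hcen (h cy hcy cx hcx) k).symm) g

/-- In a group where the commutator `⁅x,y⁆` is central, `⁅x², y⁆ = ⁅x,y⁆²`. -/
lemma sq_commutator {x y : G} (hc : ∀ g : G, Commute ⁅x, y⁆ g) :
    ⁅x ^ 2, y⁆ = ⁅x, y⁆ ^ 2 := by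
  have key : ⁅x ^ 2, y⁆ = x * ⁅x, y⁆ * x⁻¹ * ⁅x, y⁆ := by
    simp only [commutatorElement_def, pow_two]
    group
  have h2 : x * ⁅x, y⁆ * x⁻¹ = ⁅x, y⁆ := by
    rw [← (hc x).eq, mul_inv_cancel_right]
  rw [key, h2, sq]

end Helpers

theorem stmt16 (n : ℕ) (hn : 1 ≤ n) :
    ⁅Rsub n, Rsub n⁆ ⊔ ⁅Ssub n, Ssub n⁆ =
      Subgroup.closure
        ((Subgroup.lowerCentralSeries (⊤ : Subgroup (FG n)) 2 : Set (FG n)) ∪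
          {w | ∃ i j : Fin n, i < j ∧ w = (agen n i)⁻¹ * (agen n j)⁻¹ * agen n i * agen n j} ∪
          {w | ∃ i : Fin n, w = ((agen n i)⁻¹ * (bgen n)⁻¹ * agen n i * bgen n) ^ 2}) := by
  classical
  set T : Set (FG n) :=
      ((Subgroup.lowerCentralSeries (⊤ : Subgroup (FG n)) 2 : Set (FG n)) ∪
          {w | ∃ i j : Fin n, i < j ∧ w = (agen n i)⁻¹ * (agen n j)⁻¹ * agen n i * agen n j} ∪
          {w | ∃ i : Fin n, w = ((agen n i)⁻¹ * (bgen n)⁻¹ * agen n i * bgen n) ^ 2}) with hTdef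
  -- Basic membership facts about `T`
  have hT1 : ∀ x ∈ Subgroup.lowerCentralSeries (⊤ : Subgroup (FG n)) 2, x ∈ T := fun x hx =>
    Or.inl (Or.inl hx)
  have hT2 : ∀ i j : Fin n, i < j → ⁅(agen n i)⁻¹, (agen n j)⁻¹⁆ ∈ T := fun i j hij =>
    Or.inl (Or.inr ⟨i, j, hij, by rw [commutatorElement_def, inv_inv, inv_inv]⟩)
  have hT3 : ∀ i : Fin n, ⁅(agen n i)⁻¹, (bgen n)⁻¹⁆ ^ 2 ∈ T := fun i =>
    Or.inr ⟨i, by rw [commutatorElement_def, inv_inv, inv_inv]⟩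
  -- every element of `T` lies in the commutator subgroup
  have hlcs21 : Subgroup.lowerCentralSeries (⊤ : Subgroup (FG n)) 2 ≤ Subgroup.lowerCentralSeries (⊤ : Subgroup (FG n)) 1 :=
    Subgroup.lowerCentralSeries_antitone _ one_le_two
  have hTcomm : ∀ t ∈ T, t ∈ Subgroup.lowerCentralSeries (⊤ : Subgroup (FG n)) 1 := by
    intro t ht
    rcases ht with (ht | ht) | ht
    · exact hlcs21 ht
    · obtain ⟨i, j, hij, rfl⟩ := ht
      rw [show (agen n i)⁻¹ * (agen n j)⁻¹ * agen n i * agen n j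
          = ⁅(agen n i)⁻¹, (agen n j)⁻¹⁆ from by rw [commutatorElement_def, inv_inv, inv_inv]]
      exact Subgroup.commutator_mem_commutator (Subgroup.mem_top _) (Subgroup.mem_top _)
    · obtain ⟨i, rfl⟩ := ht
      rw [show (agen n i)⁻¹ * (bgen n)⁻¹ * agen n i * bgen n
          = ⁅(agen n i)⁻¹, (bgen n)⁻¹⁆ from by rw [commutatorElement_def, inv_inv, inv_inv]]
      exact pow_mem
        (Subgroup.commutator_mem_commutator (Subgroup.mem_top _) (Subgroup.mem_top _)) 2
  have hlcs2_le_H : Subgroup.lowerCentralSeries (⊤ : Subgroup (FG n)) 2 ≤ Subgroup.closure T := fun x hx =>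
    Subgroup.subset_closure (hT1 x hx)
  -- the subgroup generated by T is normal
  haveI hH_normal : (Subgroup.closure T).Normal := by
    constructor
    intro h hh g
    induction hh using Subgroup.closure_induction with
    | mem t ht =>
        have h1 : g * t * g⁻¹ = ⁅t, g⁆⁻¹ * t := by
          simp only [commutatorElement_def]
          group
        rw [h1]
        exact mul_mem
          (hlcs2_le_H (inv_mem
            (Subgroup.commutator_mem_commutator (hTcomm t ht) (Subgroup.mem_top g))))
          (Subgroup.subset_closure ht)
    | one => simpa using (Subgroup.closure T).one_mem
    | mul x y hx hy ihx ihy =>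
        have e : g * (x * y) * g⁻¹ = (g * x * g⁻¹) * (g * y * g⁻¹) := by group
        rw [e]; exact mul_mem ihx ihy
    | inv x hx ih =>
        have e : g * x⁻¹ * g⁻¹ = (g * x * g⁻¹)⁻¹ := by group
        rw [e]; exact inv_mem ih
  -- the quotient by `closure T`
  set π : FG n →* FG n ⧸ Subgroup.closure T := QuotientGroup.mk' (Subgroup.closure T) with hπ
  have hsurj : Function.Surjective π := QuotientGroup.mk'_surjective _
  have hmem_iff : ∀ x : FG n, π x = 1 ↔ x ∈ Subgroup.closure T := by
    intro x
    rw [← MonoidHom.mem_ker, QuotientGroup.ker_mk']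
  -- all commutators are central in the quotient
  have hcenQ : ∀ x y : FG n ⧸ Subgroup.closure T, ⁅x, y⁆ ∈ Subgroup.center _ := by
    intro x y
    rw [Subgroup.mem_center_iff]
    intro z
    obtain ⟨x', rfl⟩ := hsurj x
    obtain ⟨y', rfl⟩ := hsurj y
    obtain ⟨z', rfl⟩ := hsurj z
    have h1 : ⁅⁅x', y'⁆, z'⁆ ∈ Subgroup.lowerCentralSeries (⊤ : Subgroup (FG n)) 2 :=
      Subgroup.commutator_mem_commutator
        (Subgroup.commutator_mem_commutator (Subgroup.mem_top x') (Subgroup.mem_top y'))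
        (Subgroup.mem_top z')
    have h2 : π ⁅⁅x', y'⁆, z'⁆ = 1 := (hmem_iff _).2 (hlcs2_le_H h1)
    simp only [map_commutatorElement] at h2
    exact (commutatorElement_eq_one_iff_commute.1 h2).symm.eq
  have hcenter_commute : ∀ w ∈ Subgroup.center (FG n ⧸ Subgroup.closure T),
      ∀ u, Commute w u := fun w hw u => ((Subgroup.mem_center_iff.1 hw) u).symm
  -- images of elements of the commutator subgroup are central
  have hcommQ : ∀ x' ∈ commutator (FG n), ∀ u : FG n ⧸ Subgroup.closure T,
      Commute (π x') u := by
    intro x' hx' u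
    have h1 : π x' ∈ Subgroup.map π (commutator (FG n)) := Subgroup.mem_map_of_mem _ hx'
    have h2 : Subgroup.map π (commutator (FG n)) ≤ Subgroup.center _ := by
      rw [commutator_def, Subgroup.map_commutator]
      exact Subgroup.commutator_le.2 fun g1 _ g2 _ => hcenQ g1 g2
    exact hcenter_commute _ (h2 h1) u
  -- images of the a-generators pairwise commute
  have hAAinv : ∀ i j : Fin n, Commute (π (agen n i))⁻¹ (π (agen n j))⁻¹ := by
    intro i j
    rcases lt_trichotomy i j with hij | rfl | hji
    · have h := (hmem_iff _).2 (Subgroup.subset_closure (hT2 i j hij))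
      rw [map_commutatorElement, map_inv, map_inv] at h
      exact commutatorElement_eq_one_iff_commute.1 h
    · exact Commute.refl _
    · have h := (hmem_iff _).2 (Subgroup.subset_closure (hT2 j i hji))
      rw [map_commutatorElement, map_inv, map_inv] at h
      exact (commutatorElement_eq_one_iff_commute.1 h).symm
  have hAA : ∀ i j : Fin n, Commute (π (agen n i)) (π (agen n j)) := by
    intro i j
    have h := (hAAinv i j).inv_inv
    simpa using h
  have hAB2 : ∀ i : Fin n, ⁅π (agen n i), π (bgen n)⁆ ^ 2 = 1 := by
    intro i
    have h0 : ⁅(π (agen n i))⁻¹, (π (bgen n))⁻¹⁆ ^ 2 = 1 := by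
      have h := (hmem_iff _).2 (Subgroup.subset_closure (hT3 i))
      rw [map_pow, map_commutatorElement, map_inv, map_inv] at h
      exact h
    have hconj : ⁅π (agen n i), π (bgen n)⁆ ^ 2 =
        (π (bgen n) * π (agen n i)) * ⁅(π (agen n i))⁻¹, (π (bgen n))⁻¹⁆ ^ 2 *
          (π (bgen n) * π (agen n i))⁻¹ := by
      simp only [commutatorElement_def, pow_two]
      group
    rw [hconj, h0, mul_one, mul_inv_cancel]
  -- ⁅R, R⁆ ≤ closure T
  have RR_le : ⁅Rsub n, Rsub n⁆ ≤ Subgroup.closure T := by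
    rw [Subgroup.commutator_le]
    intro r1 h1 r2 h2
    rw [← hmem_iff, map_commutatorElement, commutatorElement_eq_one_iff_commute]
    have hmap : Subgroup.map π (Rsub n) =
        Subgroup.normalClosure (π '' (Set.range (agen n) ∪ (commutator (FG n) : Set (FG n)))) :=
      Subgroup.map_normalClosure _ _ hsurj
    have hpair : ∀ x ∈ π '' (Set.range (agen n) ∪ (commutator (FG n) : Set (FG n))),
        ∀ y ∈ π '' (Set.range (agen n) ∪ (commutator (FG n) : Set (FG n))), Commute x y := by
      rintro x ⟨x', hx', rfl⟩ y ⟨y', hy', rfl⟩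
      rcases hx' with hx' | hx'
      · obtain ⟨i, rfl⟩ := hx'
        rcases hy' with hy' | hy'
        · obtain ⟨j, rfl⟩ := hy'
          exact hAA i j
        · exact (hcommQ y' hy' (π (agen n i))).symm
      · exact hcommQ x' hx' _
    have m1 : π r1 ∈ Subgroup.normalClosure
        (π '' (Set.range (agen n) ∪ (commutator (FG n) : Set (FG n)))) := by
      rw [← hmap]; exact Subgroup.mem_map_of_mem π h1
    have m2 : π r2 ∈ Subgroup.normalClosure
        (π '' (Set.range (agen n) ∪ (commutator (FG n) : Set (FG n)))) := by
      rw [← hmap]; exact Subgroup.mem_map_of_mem π h2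
    exact normalClosure_pairwise_commute hcenQ hpair _ m1 _ m2
  -- ⁅S, S⁆ ≤ closure T
  have hA2B : ∀ i : Fin n, Commute (π (agen n i) ^ 2) (π (bgen n)) := by
    intro i
    apply commutatorElement_eq_one_iff_commute.1
    rw [sq_commutator (fun g => hcenter_commute _ (hcenQ (π (agen n i)) (π (bgen n))) g)]
    exact hAB2 i
  have SS_le : ⁅Ssub n, Ssub n⁆ ≤ Subgroup.closure T := by
    rw [Subgroup.commutator_le]
    intro r1 h1 r2 h2
    rw [← hmem_iff, map_commutatorElement, commutatorElement_eq_one_iff_commute]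
    set sS : Set (FG n) :=
      (Set.range fun i => agen n i ^ 2) ∪ {bgen n} ∪ (commutator (FG n) : Set (FG n)) with hsS
    have hmap : Subgroup.map π (Ssub n) = Subgroup.normalClosure (π '' sS) :=
      Subgroup.map_normalClosure _ _ hsurj
    have hpair : ∀ x ∈ π '' sS, ∀ y ∈ π '' sS, Commute x y := by
      rintro x ⟨x', hx', rfl⟩ y ⟨y', hy', rfl⟩
      rcases hx' with (hx' | hx') | hx'
      · obtain ⟨i, rfl⟩ := hx'
        rcases hy' with (hy' | hy') | hy'
        · obtain ⟨j, rfl⟩ := hy'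
          simp only [map_pow]
          exact (hAA i j).pow_pow 2 2
        · rw [Set.mem_singleton_iff] at hy'
          subst hy'
          simp only [map_pow]
          exact hA2B i
        · exact (hcommQ y' hy' _).symm
      · rw [Set.mem_singleton_iff] at hx'
        subst hx'
        rcases hy' with (hy' | hy') | hy'
        · obtain ⟨j, rfl⟩ := hy'
          simp only [map_pow]
          exact (hA2B j).symm
        · rw [Set.mem_singleton_iff] at hy'
          subst hy'
          exact Commute.refl _
        · exact (hcommQ y' hy' _).symm
      · exact hcommQ x' hx' _
    have m1 : π r1 ∈ Subgroup.normalClosure (π '' sS) := by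
      rw [← hmap]; exact Subgroup.mem_map_of_mem π h1
    have m2 : π r2 ∈ Subgroup.normalClosure (π '' sS) := by
      rw [← hmap]; exact Subgroup.mem_map_of_mem π h2
    exact normalClosure_pairwise_commute hcenQ hpair _ m1 _ m2
  -- Now the reverse inclusion.  Set N := ⁅R,R⁆ ⊔ ⁅S,S⁆.
  set N : Subgroup (FG n) := ⁅Rsub n, Rsub n⁆ ⊔ ⁅Ssub n, Ssub n⁆ with hN
  haveI hN_normal : N.Normal := by
    rw [hN]
    infer_instance
  have hcR : ∀ c ∈ commutator (FG n), c ∈ Rsub n := fun c hc =>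
    Subgroup.subset_normalClosure (Or.inr hc)
  have hcS : ∀ c ∈ commutator (FG n), c ∈ Ssub n := fun c hc =>
    Subgroup.subset_normalClosure (Or.inr hc)
  have hAiR : ∀ i, agen n i ∈ Rsub n := fun i =>
    Subgroup.subset_normalClosure (Or.inl ⟨i, rfl⟩)
  have hBS : bgen n ∈ Ssub n :=
    Subgroup.subset_normalClosure (Or.inl (Or.inr rfl))
  have hAi2S : ∀ i, agen n i ^ 2 ∈ Ssub n := fun i =>
    Subgroup.subset_normalClosure (Or.inl (Or.inl ⟨i, rfl⟩))
  -- γ₃ ≤ N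
  have hγN : Subgroup.lowerCentralSeries (⊤ : Subgroup (FG n)) 2 ≤ N := by
    show ⁅Subgroup.lowerCentralSeries (⊤ : Subgroup (FG n)) 1, (⊤ : Subgroup (FG n))⁆ ≤ N
    rw [Subgroup.commutator_le]
    intro c hc f _
    set ρ : FG n →* FG n ⧸ N := QuotientGroup.mk' N with hρ
    have hkerN : ∀ x : FG n, ρ x = 1 ↔ x ∈ N := by
      intro x
      rw [← MonoidHom.mem_ker, QuotientGroup.ker_mk']
    have key : ∀ x : Fin n ⊕ Unit, Commute (ρ c) (ρ (FreeGroup.of x)) := by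
      intro x
      cases x with
      | inl i =>
          apply commutatorElement_eq_one_iff_commute.1
          rw [← map_commutatorElement]
          exact (hkerN _).2 (le_sup_left (α := Subgroup (FG n))
            (Subgroup.commutator_mem_commutator (hcR c hc) (hAiR i)))
      | inr u =>
          cases u
          apply commutatorElement_eq_one_iff_commute.1
          rw [← map_commutatorElement]
          exact (hkerN _).2 (le_sup_right (α := Subgroup (FG n))
            (Subgroup.commutator_mem_commutator (hcS c hc) hBS))
    have hfin : ρ f ∈ Subgroup.centralizer {ρ c} := by
      have hle : (⊤ : Subgroup (FG n)) ≤
          Subgroup.comap ρ (Subgroup.centralizer {ρ c}) := by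
        rw [← FreeGroup.closure_range_of (Fin n ⊕ Unit)]
        refine (Subgroup.closure_le _).2 ?_
        rintro _ ⟨x, rfl⟩
        show ρ (FreeGroup.of x) ∈ Subgroup.centralizer {ρ c}
        refine Subgroup.mem_centralizer_iff.2 ?_
        intro z hz
        rw [Set.mem_singleton_iff] at hz
        subst hz
        exact (key x).eq
      exact hle (Subgroup.mem_top f)
    have hcf : Commute (ρ c) (ρ f) :=
      Subgroup.mem_centralizer_iff.1 hfin (ρ c) (Set.mem_singleton _)
    rw [← hkerN, map_commutatorElement]
    exact commutatorElement_eq_one_iff_commute.2 hcf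
  -- T ⊆ N
  have hTN : T ⊆ (N : Set (FG n)) := by
    intro t ht
    rcases ht with (ht | ht) | ht
    · exact hγN ht
    · obtain ⟨i, j, hij, rfl⟩ := ht
      rw [show (agen n i)⁻¹ * (agen n j)⁻¹ * agen n i * agen n j
          = ⁅(agen n i)⁻¹, (agen n j)⁻¹⁆ from by rw [commutatorElement_def, inv_inv, inv_inv]]
      exact le_sup_left (α := Subgroup (FG n))
        (Subgroup.commutator_mem_commutator (inv_mem (hAiR i)) (inv_mem (hAiR j)))
    · obtain ⟨i, rfl⟩ := ht
      rw [show (agen n i)⁻¹ * (bgen n)⁻¹ * agen n i * bgen n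
          = ⁅(agen n i)⁻¹, (bgen n)⁻¹⁆ from by rw [commutatorElement_def, inv_inv, inv_inv]]
      have hid : ⁅(agen n i)⁻¹, (bgen n)⁻¹⁆ ^ 2 =
          ⁅⁅(agen n i)⁻¹, (bgen n)⁻¹⁆, (agen n i)⁻¹⁆ * ⁅(agen n i)⁻¹ ^ 2, (bgen n)⁻¹⁆ := by
        simp only [commutatorElement_def, pow_two]
        group
      rw [hid]
      apply mul_mem
      · exact hγN (Subgroup.commutator_mem_commutator
          (Subgroup.commutator_mem_commutator (Subgroup.mem_top _) (Subgroup.mem_top _))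
          (Subgroup.mem_top _))
      · have hx : (agen n i)⁻¹ ^ 2 ∈ Ssub n := by
          rw [inv_pow]
          exact inv_mem (hAi2S i)
        exact le_sup_right (α := Subgroup (FG n))
          (Subgroup.commutator_mem_commutator hx (inv_mem hBS))
  -- conclude
  exact le_antisymm (sup_le RR_le SS_le) ((Subgroup.closure_le _).2 hTN)
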